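/- Fixed-point characterization of the minimizer: a vector u ∈ ℝ^J is the (unique) global minimizer of L if and only if (MᵀW(u)M + μ·Id)·u = MᵀW(u)·Y, where W(u) ∈ ℝ^{I×I} is the diagonal matrix with entries W(u)_{ii} = (r_i(u)² + ε)^{−1/2}; i.e., the minimizer of L is exactly the fixed point of the MM update map. -/

import Mathlib

noncomputable section

/-- The residual `r_i(u) = Y_i − ⟨M_i, u⟩`, where `M_i` is the i-th row of `M`. -/
def resid {I J : ℕ} (Y : Fin I → ℝ) (M : Matrix (Fin I) (Fin J) ℝ)
    (u : EuclideanSpace ℝ (Fin J)) (i : Fin I) : ℝ :=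
  Y i - ∑ j, M i j * u j

/-- The smoothed regularized ℓ1 loss `L(u) = Σ_i √(r_i(u)² + ε) + (μ/2)‖u‖²`. -/
def Lloss {I J : ℕ} (Y : Fin I → ℝ) (M : Matrix (Fin I) (Fin J) ℝ) (ε μ : ℝ)
    (u : EuclideanSpace ℝ (Fin J)) : ℝ :=
  (∑ i, Real.sqrt ((resid Y M u i) ^ 2 + ε)) + μ / 2 * ‖u‖ ^ 2

/-- The MM surrogate
`h(u|ũ) = Σ_i [√(r_i(ũ)² + ε) + (r_i(u)² − r_i(ũ)²)/(2√(r_i(ũ)² + ε))] + (μ/2)‖u‖²`. -/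
def surrogate {I J : ℕ} (Y : Fin I → ℝ) (M : Matrix (Fin I) (Fin J) ℝ) (ε μ : ℝ)
    (ut u : EuclideanSpace ℝ (Fin J)) : ℝ :=
  (∑ i, (Real.sqrt ((resid Y M ut i) ^ 2 + ε) +
      ((resid Y M u i) ^ 2 - (resid Y M ut i) ^ 2) /
        (2 * Real.sqrt ((resid Y M ut i) ^ 2 + ε)))) + μ / 2 * ‖u‖ ^ 2

open Matrix

/-- The diagonal weight matrix with `W(u)_{ii} = (r_i(u)² + ε)^{−1/2}`. -/
def weightMat {I J : ℕ} (Y : Fin I → ℝ) (M : Matrix (Fin I) (Fin J) ℝ) (ε : ℝ)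
    (u : EuclideanSpace ℝ (Fin J)) : Matrix (Fin I) (Fin I) ℝ :=
  Matrix.diagonal fun i => (Real.sqrt ((resid Y M u i) ^ 2 + ε))⁻¹

/-- Tangent line below the convex function `x ↦ √(x² + ε)`. -/
lemma aux_tangent_le (a b ε : ℝ) (hε : 0 < ε) :
    Real.sqrt (a ^ 2 + ε) + (b - a) * a / Real.sqrt (a ^ 2 + ε) ≤ Real.sqrt (b ^ 2 + ε) := by
  have hA : 0 < Real.sqrt (a ^ 2 + ε) := Real.sqrt_pos.mpr (by positivity)
  have hB : 0 < Real.sqrt (b ^ 2 + ε) := Real.sqrt_pos.mpr (by positivity)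
  have hA2 : Real.sqrt (a ^ 2 + ε) ^ 2 = a ^ 2 + ε := Real.sq_sqrt (by positivity)
  have hB2 : Real.sqrt (b ^ 2 + ε) ^ 2 = b ^ 2 + ε := Real.sq_sqrt (by positivity)
  set A := Real.sqrt (a ^ 2 + ε)
  set B := Real.sqrt (b ^ 2 + ε)
  have key : a * b + ε ≤ A * B := by
    nlinarith [sq_nonneg (A * B - (a * b + ε)), sq_nonneg (A * B + (a * b + ε)),
      sq_nonneg (a - b), mul_pos hA hB]
  have h : (b - a) * a / A ≤ B - A := (div_le_iff₀ hA).mpr (by nlinarith)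
  linarith

/-- Majorization of `√(x² + ε)` by the quadratic surrogate. -/
lemma aux_majorize (a b ε : ℝ) (hε : 0 < ε) :
    Real.sqrt (b ^ 2 + ε) ≤
      Real.sqrt (a ^ 2 + ε) + (b ^ 2 - a ^ 2) / (2 * Real.sqrt (a ^ 2 + ε)) := by
  have hA : 0 < Real.sqrt (a ^ 2 + ε) := Real.sqrt_pos.mpr (by positivity)
  have hA2 : Real.sqrt (a ^ 2 + ε) ^ 2 = a ^ 2 + ε := Real.sq_sqrt (by positivity)
  have hB2 : Real.sqrt (b ^ 2 + ε) ^ 2 = b ^ 2 + ε := Real.sq_sqrt (by positivity)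
  have h : Real.sqrt (b ^ 2 + ε) - Real.sqrt (a ^ 2 + ε) ≤
      (b ^ 2 - a ^ 2) / (2 * Real.sqrt (a ^ 2 + ε)) := by
    rw [le_div_iff₀ (by positivity)]
    nlinarith [sq_nonneg (Real.sqrt (a ^ 2 + ε) - Real.sqrt (b ^ 2 + ε))]
  linarith

lemma aux_norm_sq {J : ℕ} (u : EuclideanSpace ℝ (Fin J)) : ‖u‖ ^ 2 = ∑ j, (u j) ^ 2 := by
  rw [EuclideanSpace.norm_eq, Real.sq_sqrt (by positivity)]
  simp [sq_abs]

lemma aux_eq_iff {I J : ℕ} (Y : Fin I → ℝ) (M : Matrix (Fin I) (Fin J) ℝ) (ε μ : ℝ)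
    (u : EuclideanSpace ℝ (Fin J)) :
    ((Mᵀ * weightMat Y M ε u * M + μ • (1 : Matrix (Fin J) (Fin J) ℝ)) *ᵥ u =
          (Mᵀ * weightMat Y M ε u) *ᵥ Y) ↔
      ∀ j, ∑ i, M i j * (Real.sqrt ((resid Y M u i) ^ 2 + ε))⁻¹ * resid Y M u i = μ * u j := by
  set w : Fin I → ℝ := fun i => (Real.sqrt ((resid Y M u i) ^ 2 + ε))⁻¹ with hw
  have hW : Mᵀ * weightMat Y M ε u = Matrix.of (fun j i => M i j * w i) := by
    ext a b
    simp [weightMat, Matrix.mul_diagonal]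
    exact Or.inl rfl
  rw [hW]
  have h1 : ∀ j, ((Matrix.of (fun j i => M i j * w i) * M
        + μ • (1 : Matrix (Fin J) (Fin J) ℝ)) *ᵥ u) j
      = (∑ i, M i j * w i * (∑ k, M i k * u k)) + μ * u j := by
    intro j
    rw [Matrix.add_mulVec, Matrix.smul_mulVec, Matrix.one_mulVec]
    simp only [Pi.add_apply, Pi.smul_apply, smul_eq_mul]
    congr 1
    simp only [Matrix.mulVec, dotProduct, Matrix.mul_apply, Matrix.of_apply, Finset.sum_mul]
    rw [Finset.sum_comm]
    refine Finset.sum_congr rfl fun i _ => ?_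
    rw [Finset.mul_sum]
    exact Finset.sum_congr rfl fun k _ => by ring
  have h2 : ∀ j, ((Matrix.of (fun j i => M i j * w i)) *ᵥ Y) j = ∑ i, M i j * w i * Y i := by
    intro j
    simp only [Matrix.mulVec, dotProduct, Matrix.of_apply]
  rw [funext_iff]
  apply forall_congr'
  intro j
  rw [h1, h2]
  have h3 : ∑ i, M i j * w i * resid Y M u i
      = (∑ i, M i j * w i * Y i) - ∑ i, M i j * w i * (∑ k, M i k * u k) := by
    rw [← Finset.sum_sub_distrib]
    exact Finset.sum_congr rfl fun i _ => by rw [resid]; ring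
  constructor <;> intro h
  · rw [h3]; linarith
  · rw [h3] at h; linarith

theorem Lloss_min_iff_fixed_point (I J : ℕ) (hI : 0 < I) (hJ : 0 < J)
    (Y : Fin I → ℝ) (M : Matrix (Fin I) (Fin J) ℝ) (ε μ : ℝ) (hε : 0 < ε) (hμ : 0 < μ) :
    ∀ u : EuclideanSpace ℝ (Fin J),
      (∀ v : EuclideanSpace ℝ (Fin J), Lloss Y M ε μ u ≤ Lloss Y M ε μ v) ↔
        (Mᵀ * weightMat Y M ε u * M + μ • (1 : Matrix (Fin J) (Fin J) ℝ)) *ᵥ u =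
          (Mᵀ * weightMat Y M ε u) *ᵥ Y := by
  intro u
  rw [aux_eq_iff]
  set w : Fin I → ℝ := fun i => (Real.sqrt ((resid Y M u i) ^ 2 + ε))⁻¹ with hw
  have hwpos : ∀ i, 0 < w i := fun i => by
    rw [hw]
    exact inv_pos.mpr (Real.sqrt_pos.mpr (by positivity))
  have hA2 : ∀ i, Real.sqrt ((resid Y M u i) ^ 2 + ε) ^ 2 = (resid Y M u i) ^ 2 + ε :=
    fun i => Real.sq_sqrt (by positivity)
  constructor
  · -- minimizer ⇒ fixed point
    intro hmin j
    set S1 : ℝ := ∑ i, M i j * w i * resid Y M u i with hS1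
    set S2 : ℝ := ∑ i, w i * (M i j) ^ 2 with hS2
    have hS2nonneg : 0 ≤ S2 :=
      Finset.sum_nonneg fun i _ => mul_nonneg (hwpos i).le (sq_nonneg _)
    have key : ∀ t : ℝ, 0 ≤ -t * S1 + t ^ 2 / 2 * S2 + μ * t * u j + μ * t ^ 2 / 2 := by
      intro t
      set v : EuclideanSpace ℝ (Fin J) := u + t • EuclideanSpace.single j (1 : ℝ) with hvdef
      have hv : ∀ k, v k = u k + if k = j then t else 0 := by
        intro k
        rw [hvdef]
        by_cases h : k = j <;> simp [h, EuclideanSpace.single_apply]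
      have hres : ∀ i, resid Y M v i = resid Y M u i - t * M i j := by
        intro i
        have e : ∀ k, M i k * v k = M i k * u k + (if k = j then M i j * t else 0) := by
          intro k
          rw [hv k]
          by_cases h : k = j <;> simp [h] <;> ring
        simp only [resid, Finset.sum_congr rfl fun k _ => e k, Finset.sum_add_distrib,
          Finset.sum_ite_eq' Finset.univ j fun _ => M i j * t, Finset.mem_univ, if_true]
        ring
      have hnorm : ‖v‖ ^ 2 = ‖u‖ ^ 2 + 2 * t * u j + t ^ 2 := by
        rw [aux_norm_sq, aux_norm_sq]
        have e : ∀ k, (v k) ^ 2 = (u k) ^ 2 + (if k = j then 2 * u k * t + t ^ 2 else 0) := by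
          intro k
          rw [hv k]
          by_cases h : k = j <;> simp [h] <;> ring
        rw [Finset.sum_congr rfl fun k _ => e k, Finset.sum_add_distrib,
          Finset.sum_ite_eq' Finset.univ j fun k => 2 * u k * t + t ^ 2]
        simp only [Finset.mem_univ, if_true]
        ring
      have hsum : ∑ i, Real.sqrt ((resid Y M v i) ^ 2 + ε)
          ≤ ∑ i, (Real.sqrt ((resid Y M u i) ^ 2 + ε)
              + (-(t * (w i * resid Y M u i * M i j)) + t ^ 2 / 2 * (w i * (M i j) ^ 2))) := by
        refine Finset.sum_le_sum fun i _ => ?_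
        have hm := aux_majorize (resid Y M u i) (resid Y M v i) ε hε
        have hApos : 0 < Real.sqrt ((resid Y M u i) ^ 2 + ε) :=
          Real.sqrt_pos.mpr (by positivity)
        have e : ((resid Y M v i) ^ 2 - (resid Y M u i) ^ 2)
              / (2 * Real.sqrt ((resid Y M u i) ^ 2 + ε))
            = -(t * (w i * resid Y M u i * M i j)) + t ^ 2 / 2 * (w i * (M i j) ^ 2) := by
          rw [hres i, hw]
          field_simp
          ring
        rw [← e]
        exact hm
      have hLv := hmin v
      rw [Lloss, Lloss, hnorm] at hLv
      have hsum2 : ∑ i, (Real.sqrt ((resid Y M u i) ^ 2 + ε)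
              + (-(t * (w i * resid Y M u i * M i j)) + t ^ 2 / 2 * (w i * (M i j) ^ 2)))
          = (∑ i, Real.sqrt ((resid Y M u i) ^ 2 + ε)) + (-t * S1 + t ^ 2 / 2 * S2) := by
        have ea : ∑ i, -(t * (w i * resid Y M u i * M i j)) = -t * S1 := by
          rw [hS1, Finset.mul_sum]
          exact Finset.sum_congr rfl fun i _ => by ring
        have eb : ∑ i, t ^ 2 / 2 * (w i * (M i j) ^ 2) = t ^ 2 / 2 * S2 := by
          rw [hS2, Finset.mul_sum]
        rw [Finset.sum_add_distrib, Finset.sum_add_distrib, ea, eb]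
      nlinarith [hsum, hLv, hsum2]
    have hc : 0 < (S2 + μ) / 2 := by positivity
    set g : ℝ := S1 - μ * u j with hg
    have hpos : 0 < S2 + μ := by positivity
    have hg0 : g = 0 := by
      set t : ℝ := g / (S2 + μ) with htdef
      have ht : t * (S2 + μ) = g := div_mul_cancel₀ g hpos.ne'
      have h := key t
      have h2 : 0 ≤ -(t * g) / 2 := by
        have e1 : -t * S1 + t ^ 2 / 2 * S2 + μ * t * u j + μ * t ^ 2 / 2
            = -(t * g) / 2 + (t * (t * (S2 + μ) - g)) / 2 := by rw [hg]; ring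
        rw [ht, sub_self, mul_zero, zero_div, add_zero] at e1
        linarith [h, e1.le, e1.ge]
      have hg2 : g ^ 2 = t * g * (S2 + μ) := by rw [← ht]; ring
      clear_value t g S1 S2
      have hzero : g ^ 2 = 0 := le_antisymm
        (by nlinarith [mul_nonneg h2 hpos.le]) (sq_nonneg g)
      exact sq_eq_zero_iff.mp hzero
    rw [hS1] at hg
    have : ∑ i, M i j * w i * resid Y M u i = μ * u j := by linarith [hg0, hg.symm.le]
    exact this
  · -- fixed point ⇒ minimizer
    intro heq v
    have hT : ∑ i, w i * resid Y M u i * (resid Y M v i - resid Y M u i)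
        = μ * ∑ k, u k * (u k - v k) := by
      have e1 : ∀ i, w i * resid Y M u i * (resid Y M v i - resid Y M u i)
          = ∑ k, (M i k * w i * resid Y M u i) * (u k - v k) := by
        intro i
        have e0 : resid Y M v i - resid Y M u i = ∑ k, M i k * (u k - v k) := by
          simp only [resid, mul_sub, Finset.sum_sub_distrib]
          ring
        rw [e0, Finset.mul_sum]
        exact Finset.sum_congr rfl fun k _ => by ring
      rw [Finset.sum_congr rfl fun i _ => e1 i, Finset.sum_comm, Finset.mul_sum]
      refine Finset.sum_congr rfl fun k _ => ?_
      rw [← Finset.sum_mul, heq k]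
      ring
    have hmaj : ∀ i ∈ Finset.univ,
        Real.sqrt ((resid Y M u i) ^ 2 + ε)
            + w i * resid Y M u i * (resid Y M v i - resid Y M u i)
          ≤ Real.sqrt ((resid Y M v i) ^ 2 + ε) := by
      intro i _
      have ht := aux_tangent_le (resid Y M u i) (resid Y M v i) ε hε
      have e : (resid Y M v i - resid Y M u i) * resid Y M u i
            / Real.sqrt ((resid Y M u i) ^ 2 + ε)
          = w i * resid Y M u i * (resid Y M v i - resid Y M u i) := by
        rw [hw, div_eq_mul_inv]
        ring
      rw [e] at ht
      exact ht
    have hsum := Finset.sum_le_sum hmaj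
    rw [Finset.sum_add_distrib, hT] at hsum
    have hq : 2 * ∑ k, u k * (u k - v k)
        = (∑ k, (u k - v k) ^ 2) + (∑ k, (u k) ^ 2) - ∑ k, (v k) ^ 2 := by
      rw [Finset.mul_sum, ← Finset.sum_add_distrib, ← Finset.sum_sub_distrib]
      exact Finset.sum_congr rfl fun k _ => by ring
    have hpos : 0 ≤ ∑ k, (u k - v k) ^ 2 := Finset.sum_nonneg fun k _ => sq_nonneg _
    rw [Lloss, Lloss, aux_norm_sq u, aux_norm_sq v]
    nlinarith [hsum, hq, hpos]
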